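/- Let p be a prime, G a finite group, R a normal subgroup of G which is a p-group, and s ∈ G an element of order coprime to p such that G = R⟨s⟩ (that is, R together with s generates G). Then a subgroup L of G satisfies LR = G if and only if there exists x ∈ R such that the conjugate s^x = x⁻¹sx belongs to L; moreover, in that case L = (L ∩ R)⟨s^x⟩ and the subgroup L ∩ R is normalized by s^x. -/

import Mathlib

open scoped Pointwise

open Subgroup

universe u

private def mkQD {G : Type u} [Group G] (H : Subgroup G) [IsMulCommutative H] [H.FiniteIndex]
    (T : H.LeftTransversal) : H.QuotientDiff :=
  Quotient.mk'' T

private lemma myConjA {G : Type u} [Group G] [Finite G] (H A B : Subgroup G) [H.Normal]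
    [IsMulCommutative H] (hcop : Nat.Coprime (Nat.card H) H.index)
    (hA : IsComplement' H A) (hB : IsComplement' H B) :
    ∃ x ∈ H, A.map (MulAut.conj x).toMonoidHom = B := by
  classical
  have hAT : (A : Set G) ∈ {S : Set G | IsComplement S (H : Set G)} := hA.symm
  have hBT : (B : Set G) ∈ {S : Set G | IsComplement S (H : Set G)} := hB.symm
  have key : ∀ (C : Subgroup G) (hCT : (C : Set G) ∈ {S : Set G | IsComplement S (H : Set G)}),
      MulAction.stabilizer G (mkQD H ⟨(C : Set G), hCT⟩) = C := by
    intro C hCT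
    have hC : IsComplement' C H := hCT
    have hle : C ≤ MulAction.stabilizer G (mkQD H ⟨(C : Set G), hCT⟩) := by
      intro c hc
      have hset : (MulOpposite.op c⁻¹ •
          (⟨(C : Set G), hCT⟩ : H.LeftTransversal)) = ⟨(C : Set G), hCT⟩ := by
        apply Subtype.ext
        show MulOpposite.op c⁻¹ • (C : Set G) = (C : Set G)
        ext g
        simp only [Set.mem_smul_set]
        constructor
        · rintro ⟨y, hy, rfl⟩
          simpa [MulOpposite.smul_eq_mul_unop] using C.mul_mem hy (C.inv_mem hc)
        · intro hg
          exact ⟨g * c, C.mul_mem hg hc, by simp [MulOpposite.smul_eq_mul_unop]⟩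
      have hsm : c • (mkQD H ⟨(C : Set G), hCT⟩)
          = mkQD H (MulOpposite.op c⁻¹ • ⟨(C : Set G), hCT⟩) := rfl
      show c • (mkQD H ⟨(C : Set G), hCT⟩) = mkQD H ⟨(C : Set G), hCT⟩
      rw [hsm, hset]
    have hstab := Subgroup.isComplement'_stabilizer_of_coprime
      (α := mkQD H ⟨(C : Set G), hCT⟩) hcop
    have h1 : Nat.card (MulAction.stabilizer G (mkQD H ⟨(C : Set G), hCT⟩)) = H.index :=
      (hstab.symm.index_eq_card).symm
    have h2 : Nat.card C = H.index := (hC.index_eq_card).symm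
    exact (Subgroup.eq_of_le_of_card_ge hle (by rw [h1, h2])).symm
  obtain ⟨h, hh⟩ := Subgroup.exists_smul_eq hcop
    (mkQD H ⟨(A : Set G), hAT⟩) (mkQD H ⟨(B : Set G), hBT⟩)
  refine ⟨(h : G), h.2, ?_⟩
  have hst := MulAction.stabilizer_smul_eq_stabilizer_map_conj ((h : G))
    (mkQD H ⟨(A : Set G), hAT⟩)
  have hsmul : ((h : G) • (mkQD H ⟨(A : Set G), hAT⟩)) = mkQD H ⟨(B : Set G), hBT⟩ := hh
  rw [hsmul, key B hBT, key A hAT] at hst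
  exact hst.symm

private lemma conj_comp_subtype {G : Type u} [Group G] (W : Subgroup G) (z : W) :
    (MulAut.conj (z : G)).toMonoidHom.comp W.subtype
      = W.subtype.comp (MulAut.conj z).toMonoidHom := by
  ext w
  simp [MulAut.conj_apply]

private lemma myConjB {p : ℕ} (hp : p.Prime) :
    ∀ (n : ℕ) (G : Type u) [Group G] [Finite G] (R A B : Subgroup G) [R.Normal]
      (_ : IsPGroup p R) (_ : Nat.Coprime (Nat.card R) R.index)
      (_ : Subgroup.IsComplement' R A) (_ : Subgroup.IsComplement' R B)
      (_ : Nat.card R ≤ n),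
      ∃ x ∈ R, A.map (MulAut.conj x).toMonoidHom = B := by
  intro n
  induction n with
  | zero =>
    intro G _ _ R A B _ _ _ _ _ hn
    exact absurd (Nat.le_zero.mp hn) Nat.card_pos.ne'
  | succ n ih =>
    intro G _ _ R A B _ hR hcop hA hB hn
    by_cases hbot : R = ⊥
    · subst hbot
      have hA' : A = ⊤ := Subgroup.isComplement'_bot_left.mp hA
      have hB' : B = ⊤ := Subgroup.isComplement'_bot_left.mp hB
      refine ⟨1, Subgroup.one_mem _, ?_⟩
      rw [hA', hB']
      exact Subgroup.map_top_of_surjective _ (MulAut.conj (1 : G)).surjective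
    · haveI : Fact p.Prime := ⟨hp⟩
      haveI : Nontrivial R := (Subgroup.nontrivial_iff_ne_bot R).mpr hbot
      haveI : Nontrivial (Subgroup.center R) := hR.center_nontrivial
      set Z : Subgroup G := (Subgroup.center R).map R.subtype with hZdef
      haveI : Z.Normal := by rw [hZdef]; infer_instance
      haveI : IsMulCommutative Z := by rw [hZdef]; infer_instance
      have hZR : Z ≤ R := Subgroup.map_subtype_le _
      have hZcardEq : Nat.card Z = Nat.card (Subgroup.center R) :=
        (Nat.card_congr ((Subgroup.center R).equivMapOfInjective R.subtype
          R.subtype_injective).toEquiv).symm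
      have hZcard : 1 < Nat.card Z := by
        rw [hZcardEq]; exact Finite.one_lt_card
      set π : G →* G ⧸ Z := QuotientGroup.mk' Z with hπdef
      have hπsurj : Function.Surjective π := QuotientGroup.mk'_surjective Z
      have hπker : π.ker = Z := QuotientGroup.ker_mk' Z
      haveI : (R.map π).Normal := Subgroup.Normal.map ‹R.Normal› π hπsurj
      -- card of R.map π
      have hcardbar : Nat.card (R.map π) * Nat.card Z = Nat.card R := by
        have hker : (π.comp R.subtype).ker = Z.subgroupOf R := by
          rw [← MonoidHom.comap_ker, hπker]; rfl
        have hrange : (π.comp R.subtype).range = R.map π := by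
          rw [MonoidHom.range_comp, Subgroup.range_subtype]
        have h1 : Nat.card R = Nat.card (R ⧸ (π.comp R.subtype).ker)
            * Nat.card (π.comp R.subtype).ker :=
          Subgroup.card_eq_card_quotient_mul_card_subgroup _
        have h2 : Nat.card (R ⧸ (π.comp R.subtype).ker) = Nat.card (R.map π) := by
          rw [← hrange]
          exact Nat.card_congr (QuotientGroup.quotientKerEquivRange (π.comp R.subtype)).toEquiv
        have h3 : Nat.card (π.comp R.subtype).ker = Nat.card Z := by
          rw [hker]
          exact Nat.card_congr (Subgroup.subgroupOfEquivOfLe hZR).toEquiv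
        rw [h1, h2, h3]
      have hcarddvd : Nat.card (R.map π) ∣ Nat.card R := ⟨Nat.card Z, hcardbar.symm⟩
      have hcardlt : Nat.card (R.map π) < Nat.card R := by
        have hpos : 0 < Nat.card (R.map π) := Nat.card_pos
        calc Nat.card (R.map π) = Nat.card (R.map π) * 1 := (mul_one _).symm
        _ < Nat.card (R.map π) * Nat.card Z := mul_lt_mul_of_pos_left hZcard hpos
        _ = Nat.card R := hcardbar
      have hindexbar : (R.map π).index = R.index :=
        Subgroup.index_map_eq R hπsurj (hπker.le.trans hZR)
      -- complements in the quotient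
      have hcomplbar : ∀ (C : Subgroup G), IsComplement' R C →
          IsComplement' (R.map π) (C.map π) := by
        intro C hC
        apply Subgroup.isComplement'_of_disjoint_and_mul_eq_univ
        · rw [Subgroup.disjoint_def]
          rintro g hgR hgC
          obtain ⟨c, hc, rfl⟩ := hgC
          have hcomap : c ∈ Subgroup.comap π (R.map π) := Subgroup.mem_comap.mpr hgR
          rw [Subgroup.comap_map_eq, hπker, sup_of_le_left hZR] at hcomap
          have hc1 : c = 1 := Subgroup.disjoint_def.mp hC.disjoint hcomap hc
          rw [hc1, map_one]
        · rw [← Subgroup.normal_mul, ← Subgroup.map_sup, hC.sup_eq_top,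
            Subgroup.map_top_of_surjective _ hπsurj, Subgroup.coe_top]
      -- apply induction hypothesis in the quotient
      obtain ⟨xbar, hxbar, hmapbar⟩ := ih (G ⧸ Z) (R.map π) (A.map π) (B.map π)
        (hR.map π) (by rw [hindexbar]; exact Nat.Coprime.coprime_dvd_left hcarddvd hcop)
        (hcomplbar A hA) (hcomplbar B hB)
        (by omega)
      obtain ⟨x, hxR, rfl⟩ := hxbar
      set A' : Subgroup G := A.map (MulAut.conj x).toMonoidHom with hA'def
      have hcomm : π.comp (MulAut.conj x).toMonoidHom
          = (MulAut.conj (π x)).toMonoidHom.comp π := by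
        ext g
        simp [MulAut.conj_apply]
      have hmapA' : A'.map π = B.map π := by
        calc A'.map π = A.map (π.comp (MulAut.conj x).toMonoidHom) := by
              rw [hA'def, Subgroup.map_map]
          _ = (A.map π).map (MulAut.conj (π x)).toMonoidHom := by
              rw [hcomm, ← Subgroup.map_map]
          _ = B.map π := hmapbar
      have hcardA' : Nat.card A' = Nat.card A :=
        (Nat.card_congr (A.equivMapOfInjective (MulAut.conj x).toMonoidHom
          (MulAut.conj x).injective).toEquiv).symm
      have hcardAeq : Nat.card A = R.index := (hA.symm.index_eq_card).symm
      have hA' : IsComplement' R A' := by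
        apply Subgroup.isComplement'_of_coprime
        · rw [hcardA']; exact hA.card_mul
        · rw [hcardA', hcardAeq]; exact hcop
      -- work inside W = B ⊔ Z
      set W : Subgroup G := B ⊔ Z with hWdef
      have hZW : Z ≤ W := le_sup_right
      have hBW : B ≤ W := le_sup_left
      have hA'W : A' ≤ W := by
        have h1 : A' ≤ Subgroup.comap π (A'.map π) := Subgroup.le_comap_map _ _
        rwa [hmapA', Subgroup.comap_map_eq, hπker] at h1
      -- subgroups of W
      set H₀ : Subgroup W := Z.subgroupOf W with hH₀def
      set A₀ : Subgroup W := A'.subgroupOf W with hA₀def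
      set B₀ : Subgroup W := B.subgroupOf W with hB₀def
      have hmapsub : ∀ (C : Subgroup G), C ≤ W → (C.subgroupOf W).map W.subtype = C := by
        intro C hCW
        rw [Subgroup.subgroupOf_map_subtype, inf_eq_left.mpr hCW]
      have hsup_eq_top : ∀ (C : Subgroup G), C ≤ W → C ⊔ Z = W →
          (C.subgroupOf W) ⊔ H₀ = ⊤ := by
        intro C hCW hCZ
        apply Subgroup.map_injective W.subtype_injective
        rw [Subgroup.map_sup, hmapsub C hCW, hmapsub Z hZW, hCZ,
          ← MonoidHom.range_eq_map, Subgroup.range_subtype]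
      have hcompl₀ : ∀ (C : Subgroup G), C ≤ W → C ⊔ Z = W → Disjoint R C →
          IsComplement' H₀ (C.subgroupOf W) := by
        intro C hCW hCZ hdisj
        apply Subgroup.isComplement'_of_disjoint_and_mul_eq_univ
        · rw [Subgroup.disjoint_def]
          intro u huZ huC
          have h1 : (u : G) ∈ Z := huZ
          have h2 : (u : G) ∈ C := huC
          have : (u : G) = 1 := Subgroup.disjoint_def.mp hdisj (hZR h1) h2
          exact Subtype.ext this
        · rw [← Subgroup.normal_mul, sup_comm, hsup_eq_top C hCW hCZ, Subgroup.coe_top]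
      have hWA' : A' ⊔ Z = W := by
        have h1 : Subgroup.comap π (A'.map π) = Subgroup.comap π (B.map π) := by
          rw [hmapA']
        rw [Subgroup.comap_map_eq, Subgroup.comap_map_eq, hπker] at h1
        rw [hWdef, ← h1]
      have hA₀c : IsComplement' H₀ A₀ := hcompl₀ A' hA'W hWA' hA'.disjoint
      have hB₀c : IsComplement' H₀ B₀ := hcompl₀ B hBW rfl hB.disjoint
      have hcardH₀ : Nat.card H₀ = Nat.card Z :=
        Nat.card_congr (Subgroup.subgroupOfEquivOfLe hZW).toEquiv
      have hcardB₀ : Nat.card B₀ = Nat.card B :=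
        Nat.card_congr (Subgroup.subgroupOfEquivOfLe hBW).toEquiv
      have hcardBeq : Nat.card B = R.index := (hB.symm.index_eq_card).symm
      have hcop₀ : Nat.Coprime (Nat.card H₀) H₀.index := by
        have hidx : H₀.index = Nat.card B₀ := hB₀c.symm.index_eq_card
        rw [hidx, hcardH₀, hcardB₀, hcardBeq]
        have hZdvd : Nat.card Z ∣ Nat.card R := Subgroup.card_dvd_of_le hZR
        exact Nat.Coprime.coprime_dvd_left hZdvd hcop
      obtain ⟨z₀, hz₀, hz₀eq⟩ := myConjA H₀ A₀ B₀ hcop₀ hA₀c hB₀c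
      have hzZ : (z₀ : G) ∈ Z := Subgroup.mem_subgroupOf.mp hz₀
      -- pull the conjugation back to G
      have hpull : A'.map (MulAut.conj (z₀ : G)).toMonoidHom = B := by
        have h1 : (A₀.map (MulAut.conj z₀).toMonoidHom).map W.subtype = B₀.map W.subtype := by
          rw [hz₀eq]
        rw [Subgroup.map_map, ← conj_comp_subtype W z₀, ← Subgroup.map_map,
          hmapsub A' hA'W, hmapsub B hBW] at h1
        exact h1
      refine ⟨(z₀ : G) * x, R.mul_mem (hZR hzZ) hxR, ?_⟩
      rw [← hpull, hA'def, Subgroup.map_map]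
      congr 1
      ext g
      simp [MulAut.conj_apply, mul_assoc]



/-- Let `p` be a prime, `G` a finite group, `R` a normal `p`-subgroup of `G`, and `s ∈ G` an
element of order coprime to `p` such that `G = R⟨s⟩`. Then a subgroup `L` of `G` satisfies
`LR = G` if and only if there is `x ∈ R` with `x⁻¹sx ∈ L`; moreover, in that case
`L = (L ∩ R)⟨x⁻¹sx⟩` (as a set product) and `L ∩ R` is normalized by `x⁻¹sx`. -/
theorem stmt7 (p : ℕ) (hp : p.Prime) (G : Type*) [Group G] [Fintype G]
    (R : Subgroup G) [R.Normal] (hpR : IsPGroup p R)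
    (s : G) (hs : Nat.Coprime (orderOf s) p)
    (hgen : R ⊔ Subgroup.zpowers s = ⊤) (L : Subgroup G) :
    ((L : Set G) * (R : Set G) = Set.univ ↔ ∃ x ∈ R, x⁻¹ * s * x ∈ L) ∧
    (∀ x ∈ R, x⁻¹ * s * x ∈ L →
      (L : Set G) = ((L ⊓ R : Subgroup G) : Set G)
          * ((Subgroup.zpowers (x⁻¹ * s * x) : Subgroup G) : Set G) ∧
      x⁻¹ * s * x ∈ Subgroup.normalizer ((L ⊓ R : Subgroup G) : Set G)) := by
  haveI : Fact p.Prime := ⟨hp⟩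
  obtain ⟨k, hk⟩ := IsPGroup.iff_card.mp hpR
  have hdisj : ∀ g ∈ R, g ∈ Subgroup.zpowers s → g = 1 := by
    intro g hgR hgs
    have h1 : orderOf g ∣ Nat.card R := Subgroup.orderOf_dvd_natCard R hgR
    have h2 : orderOf g ∣ orderOf s := orderOf_dvd_of_mem_zpowers hgs
    have hcop : Nat.Coprime (Nat.card R) (orderOf s) := by
      rw [hk]; exact hs.symm.pow_left k
    have h3 : orderOf g ∣ Nat.gcd (Nat.card R) (orderOf s) := Nat.dvd_gcd h1 h2
    rw [Nat.Coprime] at hcop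
    rw [hcop] at h3
    exact orderOf_eq_one_iff.mp (Nat.dvd_one.mp h3)
  have hRs : Subgroup.IsComplement' R (Subgroup.zpowers s) := by
    apply Subgroup.isComplement'_of_disjoint_and_mul_eq_univ
    · rw [Subgroup.disjoint_def]
      intro g hg hgs
      exact hdisj g hg hgs
    · rw [← Subgroup.normal_mul, hgen, Subgroup.coe_top]
  have hindex : R.index = orderOf s := by
    rw [hRs.symm.index_eq_card, Nat.card_zpowers]
  have hcopRI : Nat.Coprime (Nat.card R) R.index := by
    rw [hindex, hk]; exact hs.symm.pow_left k
  -- for any x ∈ R, the conjugate of s together with R generates G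
  have httop : ∀ x ∈ R, R ⊔ Subgroup.zpowers (x⁻¹ * s * x) = ⊤ := by
    intro x hx
    refine le_antisymm le_top ?_
    rw [← hgen]
    refine sup_le le_sup_left ?_
    rw [Subgroup.zpowers_le]
    have ht : x⁻¹ * s * x ∈ R ⊔ Subgroup.zpowers (x⁻¹ * s * x) :=
      Subgroup.mem_sup_right (Subgroup.mem_zpowers _)
    have hxm : x ∈ R ⊔ Subgroup.zpowers (x⁻¹ * s * x) := Subgroup.mem_sup_left hx
    have hmem : x * (x⁻¹ * s * x) * x⁻¹ ∈ R ⊔ Subgroup.zpowers (x⁻¹ * s * x) :=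
      mul_mem (mul_mem hxm ht) (inv_mem hxm)
    simpa [mul_assoc] using hmem
  constructor
  · constructor
    · -- forward direction
      intro hmul
      rw [← Subgroup.mul_normal] at hmul
      have hsup : L ⊔ R = ⊤ := Subgroup.coe_eq_univ.mp hmul
      have hN₀p : IsPGroup p (R.subgroupOf L) := hpR.comap_subtype
      obtain ⟨a, ha⟩ := IsPGroup.iff_card.mp hN₀p
      have hidx₀ : (R.subgroupOf L).index = R.index := by
        have hRL : R ⊔ L = ⊤ := by rw [sup_comm]; exact hsup
        have h1 : (R.subgroupOf L).index = R.relIndex L := rfl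
        rw [h1, ← Subgroup.relIndex_sup_left, hRL, Subgroup.relIndex_top_right]
      have hcop₀ : Nat.Coprime (Nat.card (R.subgroupOf L)) (R.subgroupOf L).index := by
        rw [ha, hidx₀, hindex]; exact hs.symm.pow_left a
      obtain ⟨K₀, hK₀⟩ := Subgroup.exists_right_complement'_of_coprime hcop₀
      set K : Subgroup G := K₀.map L.subtype with hKdef
      have hKL : K ≤ L := Subgroup.map_subtype_le _
      have hcardK : Nat.card K = R.index := by
        have h1 : Nat.card K = Nat.card K₀ :=
          (Nat.card_congr (K₀.equivMapOfInjective L.subtype L.subtype_injective).toEquiv).symm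
        rw [h1, ← hidx₀]
        exact (hK₀.symm.index_eq_card).symm
      have hKc : Subgroup.IsComplement' R K :=
        Subgroup.isComplement'_of_coprime
          (by rw [hcardK]; exact Subgroup.card_mul_index R)
          (by rw [hcardK]; exact hcopRI)
      obtain ⟨x, hxR, hmap⟩ := myConjB hp (Nat.card R) G R (Subgroup.zpowers s) K
        hpR hcopRI hRs hKc le_rfl
      refine ⟨x⁻¹, R.inv_mem hxR, ?_⟩
      have hxs : x * s * x⁻¹ ∈ K := by
        rw [← hmap]
        exact ⟨s, Subgroup.mem_zpowers s, by simp [MulAut.conj_apply]⟩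
      rw [inv_inv]
      exact hKL hxs
    · -- backward direction
      rintro ⟨x, hxR, hxL⟩
      have hsup : L ⊔ R = ⊤ := by
        refine le_antisymm le_top ?_
        rw [← httop x hxR]
        refine sup_le le_sup_right ?_
        rw [Subgroup.zpowers_le]
        exact Subgroup.mem_sup_left hxL
      rw [← Subgroup.mul_normal, hsup, Subgroup.coe_top]
  · -- moreover part
    intro x hxR hxL
    set t : G := x⁻¹ * s * x with htdef
    have hmulRt : (R : Set G) * (Subgroup.zpowers t : Set G) = Set.univ := by
      rw [← Subgroup.normal_mul, httop x hxR, Subgroup.coe_top]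
    constructor
    · -- L = (L ⊓ R) * ⟨t⟩
      apply Set.eq_of_subset_of_subset
      · intro g hgL
        have hg : g ∈ (R : Set G) * (Subgroup.zpowers t : Set G) := by
          rw [hmulRt]; trivial
        obtain ⟨r, hr, c, hc, rfl⟩ := hg
        have hcL : c ∈ L := Subgroup.zpowers_le.mpr hxL hc
        have hrL : r ∈ L := by
          have : r = r * c * c⁻¹ := by group
          rw [this]
          exact L.mul_mem hgL (L.inv_mem hcL)
        exact ⟨r, Subgroup.mem_inf.mpr ⟨hrL, hr⟩, c, hc, rfl⟩
      · rintro g ⟨a, ha, b, hb, rfl⟩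
        have haL : a ∈ L := ha.1
        have hbL : b ∈ L := Subgroup.zpowers_le.mpr hxL hb
        exact L.mul_mem haL hbL
    · -- t normalizes L ⊓ R
      rw [Subgroup.mem_normalizer_iff]
      intro h
      constructor
      · intro hh
        obtain ⟨hhL, hhR⟩ := Subgroup.mem_inf.mp hh
        exact Subgroup.mem_inf.mpr ⟨L.mul_mem (L.mul_mem hxL hhL) (L.inv_mem hxL),
          Subgroup.Normal.conj_mem ‹R.Normal› h hhR t⟩
      · intro hh
        obtain ⟨hhL, hhR⟩ := Subgroup.mem_inf.mp hh
        have h1 : h = t⁻¹ * (t * h * t⁻¹) * t := by group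
        refine Subgroup.mem_inf.mpr ⟨?_, ?_⟩
        · rw [h1]
          exact L.mul_mem (L.mul_mem (L.inv_mem hxL) hhL) hxL
        · rw [h1]
          have h2 := Subgroup.Normal.conj_mem ‹R.Normal› _ hhR t⁻¹
          rwa [inv_inv] at h2
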